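/- Let $G$ be an abelian group, $k$ a field, and $q \in k^\times$ not a root of unity. Suppose $g_1, \ldots, g_\theta \in G$ and characters $\chi_1, \ldots, \chi_\theta : G \to k^\times$ satisfy $\chi_i(g_i) = q^{d_i}$ for nonzero integers $d_i$ and $\chi_j(g_i)\chi_i(g_j) = \chi_i(g_i)^{a_{ij}}$ where $(a_{ij})$ is a matrix of integers with $a_{ii} = 2$ and $d_i a_{ij} = d_j a_{ji}$. If integers $k_1, \ldots, k_\theta$ satisfy $g_1^{k_1} \cdots g_\theta^{k_\theta} = 1$, then $\sum_{i=1}^\theta 2 k_i^2 d_i + \sum_{1 \leq i < j \leq \theta} 2 k_i k_j d_i a_{ij} = 0$. -/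
import Mathlib


private lemma zpow_finset_sum {M : Type*} [CommGroup M] (q : M) {ι : Type*}
    (s : Finset ι) (e : ι → ℤ) : q ^ (∑ i ∈ s, e i) = ∏ i ∈ s, q ^ e i := by
  induction s using Finset.cons_induction with
  | empty => simp
  | cons a s ha ih => rw [Finset.sum_cons, Finset.prod_cons, zpow_add, ih]


/-- If `g₁^{k₁} ⋯ g_θ^{k_θ} = 1` then the quadratic form
vanishes at `(k₁, …, k_θ)`. -/
theorem stmt_17 (K : Type*) [Field K] (G : Type*) [CommGroup G] (θ : ℕ)
    (χ : Fin θ → (G →* Kˣ)) (g : Fin θ → G)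
    (q : Kˣ) (hq : ¬ ∃ n : ℕ, 0 < n ∧ q ^ n = 1)
    (d : Fin θ → ℤ) (hd : ∀ i, d i ≠ 0)
    (hχg : ∀ i, χ i (g i) = q ^ d i)
    (a : Fin θ → Fin θ → ℤ) (haii : ∀ i, a i i = 2)
    (hda : ∀ i j, d i * a i j = d j * a j i)
    (hcartan : ∀ i j, χ j (g i) * χ i (g j) = χ i (g i) ^ a i j)
    (kk : Fin θ → ℤ) (hrel : ∏ i, g i ^ kk i = 1) :
    (∑ i, 2 * kk i ^ 2 * d i) +
      (∑ i, ∑ j, if i < j then 2 * kk i * kk j * d i * a i j else 0) = 0 := by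
  classical
  set f : Fin θ → Fin θ → ℤ := fun i j => kk i * kk j * (d i * a i j) with hf
  have hfsymm : ∀ i j, f i j = f j i := by
    intro i j; simp only [hf]; rw [hda]; ring
  set T : ℤ := ∑ i, ∑ j, f i j with hTdef
  -- Step 1: each character kills the relation
  have h1 : ∀ j, ∏ i, (χ j (g i)) ^ kk i = 1 := by
    intro j
    have := congrArg (χ j) hrel
    simpa [map_prod, map_zpow] using this
  -- Step 2: the big product is 1
  have hF : (∏ i, ∏ j, (χ j (g i)) ^ (kk i * kk j)) = 1 := by
    rw [Finset.prod_comm]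
    have h2 : ∀ j : Fin θ, ∏ i, (χ j (g i)) ^ (kk i * kk j)
        = (∏ i, (χ j (g i)) ^ kk i) ^ kk j := by
      intro j
      rw [← Finset.prod_zpow]
      exact Finset.prod_congr rfl fun i _ => by rw [← zpow_mul]
    simp [h2, h1]
  -- Step 3: q ^ T equals F * F, hence equals 1
  have hkey : ∀ i j : Fin θ,
      (χ j (g i)) ^ (kk i * kk j) * (χ i (g j)) ^ (kk j * kk i) = q ^ f i j := by
    intro i j
    rw [mul_comm (kk j) (kk i), ← mul_zpow, hcartan, hχg, ← zpow_mul, ← zpow_mul]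
    congr 1
    simp only [hf]; ring
  have hqT : q ^ T = 1 := by
    have hswap : (∏ i, ∏ j, (χ j (g i)) ^ (kk i * kk j))
        = ∏ i, ∏ j, (χ i (g j)) ^ (kk j * kk i) := Finset.prod_comm
    calc q ^ T = ∏ i, ∏ j, q ^ f i j := by
          rw [hTdef, zpow_finset_sum]
          exact Finset.prod_congr rfl fun i _ => zpow_finset_sum ..
      _ = ∏ i, ∏ j, ((χ j (g i)) ^ (kk i * kk j) * (χ i (g j)) ^ (kk j * kk i)) := by
          exact Finset.prod_congr rfl fun i _ => Finset.prod_congr rfl fun j _ =>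
            (hkey i j).symm
      _ = (∏ i, ∏ j, (χ j (g i)) ^ (kk i * kk j))
            * (∏ i, ∏ j, (χ i (g j)) ^ (kk j * kk i)) := by
          simp [Finset.prod_mul_distrib]
      _ = 1 := by rw [← hswap, hF, one_mul]
  -- Step 4: T = 0
  have hT0 : T = 0 := by
    by_contra h
    apply hq
    refine ⟨T.natAbs, Int.natAbs_pos.mpr h, ?_⟩
    have h2 : q ^ (T.natAbs : ℤ) = 1 := by
      rcases Int.natAbs_eq T with he | he
      · rw [← he, hqT]
      · rw [show (T.natAbs : ℤ) = -T by omega, zpow_neg, hqT, inv_one]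
    rw [← zpow_natCast, h2]
  -- Step 5: the quadratic form equals T
  have hsplit : ∀ i : Fin θ, (∑ j, f i j)
      = f i i + (∑ j, if i < j then f i j else 0) + (∑ j, if j < i then f i j else 0) := by
    intro i
    have : ∀ j : Fin θ, f i j = (if j = i then f i j else 0)
        + (if i < j then f i j else 0) + (if j < i then f i j else 0) := by
      intro j
      rcases lt_trichotomy i j with h | h | h
      · simp [h, h.ne', not_lt_of_gt h]
      · simp [h]
      · simp [h, h.ne, not_lt_of_gt h]
    rw [Finset.sum_congr rfl fun j _ => this j, Finset.sum_add_distrib,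
      Finset.sum_add_distrib, Finset.sum_ite_eq' Finset.univ i (f i)]
    simp
  -- reindex the lower-triangular part
  have hlow : (∑ i, ∑ j, if j < i then f i j else 0)
      = ∑ i, ∑ j, if i < j then f i j else 0 := by
    rw [Finset.sum_comm]
    exact Finset.sum_congr rfl fun i _ => Finset.sum_congr rfl fun j _ => by
      by_cases h : i < j <;> simp [h, hfsymm]
  have hdiag : ∀ i, f i i = 2 * kk i ^ 2 * d i := by
    intro i; simp only [hf, haii]; ring
  have hTS : T = (∑ i, 2 * kk i ^ 2 * d i)
      + (∑ i, ∑ j, if i < j then 2 * kk i * kk j * d i * a i j else 0) := by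
    rw [hTdef, Finset.sum_congr rfl fun i _ => hsplit i, Finset.sum_add_distrib,
      Finset.sum_add_distrib, hlow]
    have h2 : ∀ i j : Fin θ, (if i < j then 2 * kk i * kk j * d i * a i j else 0)
        = (if i < j then f i j else 0) + (if i < j then f i j else 0) := by
      intro i j; by_cases h : i < j <;> simp [h, hf] <;> ring
    simp only [hdiag, h2, Finset.sum_add_distrib]
    ring
  rw [← hTS, hT0]
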